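/- Fix n ≥ 2. For any complex numbers X, Y₁, Y₂ satisfying the relation Y₁ Y₂ = X^{n−1} (X+1)^{n+1}, there exist a, b, c, d ∈ ℂ with ad − bc = 1, bc = X, a^{n+1} b^{n−1} = Y₁ and c^{n−1} d^{n+1} = Y₂ (and then necessarily ad = X + 1). (Theorem 1.2, surjectivity: every point of the affine variety Y₁Y₂ = X^{n−1}(X+1)^{n+1} is realized by a bicritical map of degree n in normal form.) -/

import Mathlib

/-- Theorem 1.2 (surjectivity): every point `(X, Y₁, Y₂)` of the affine variety
`Y₁ Y₂ = X^{n-1} (X+1)^{n+1}` is realized by a bicritical map of degree `n`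
in normal form `(a z^n + b)/(c z^n + d)` with `ad - bc = 1`. -/
theorem stmt2 (n : ℕ) (hn : 2 ≤ n) (X Y₁ Y₂ : ℂ)
    (hrel : Y₁ * Y₂ = X ^ (n - 1) * (X + 1) ^ (n + 1)) :
    ∃ a b c d : ℂ, a * d - b * c = 1 ∧ b * c = X ∧
      a ^ (n + 1) * b ^ (n - 1) = Y₁ ∧ c ^ (n - 1) * d ^ (n + 1) = Y₂ ∧
      a * d = X + 1 := by
  have hn1 : n - 1 ≠ 0 := by omega
  by_cases hY : Y₁ = 0
  · subst hY
    rw [zero_mul] at hrel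
    rcases mul_eq_zero.mp hrel.symm with h | h
    · have hX : X = 0 := pow_eq_zero_iff hn1 |>.mp h
      obtain ⟨c, hc⟩ := IsAlgClosed.exists_pow_nat_eq Y₂ (n := n - 1) (by omega)
      exact ⟨1, 0, c, 1, by ring, by simp [hX], by simp [zero_pow hn1],
        by simp [hc], by simp [hX]⟩
    · have hX : X + 1 = 0 := pow_eq_zero_iff (by omega) |>.mp h
      obtain ⟨d, hd⟩ := IsAlgClosed.exists_pow_nat_eq Y₂ (n := n + 1) (by omega)
      refine ⟨0, -1, 1, d, by ring, ?_, by simp, by simp [hd], ?_⟩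
      · linear_combination -hX
      · simp [hX]
  · obtain ⟨b, hb⟩ := IsAlgClosed.exists_pow_nat_eq Y₁ (n := n - 1) (by omega)
    have hb0 : b ≠ 0 := fun h => hY (by simp [← hb, h, zero_pow hn1])
    refine ⟨1, b, X / b, X + 1, ?_, ?_, by simp [hb], ?_, by ring⟩
    · field_simp; ring
    · field_simp
    · have : (X / b) ^ (n - 1) * (X + 1) ^ (n + 1)
          = X ^ (n - 1) * (X + 1) ^ (n + 1) / Y₁ := by
        rw [← hb, div_pow]; ring
      rw [this, ← hrel, mul_div_assoc]; field_simp
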